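/- Let m be a positive integer and let s, t be positive real numbers such that m/s + m/t < 1 (i.e. the point (m,m) lies in the open region {(x,y) ∈ ℝ²_{≥0} : x/s + y/t < 1}). Then the number of pairs (x,y) of nonnegative integers with x/s + y/t < 1 is at least (4m² + 3m + 3)/2. (In the paper's notation: σ_{2,m} ≥ (4m² + 3m + 3)/2.) -/

import Mathlib

open Finset



lemma ceil_le (a P : ℕ) (hP : 0 < P) : a ≤ (a + (P-1))/P * P := by
  have h := Nat.div_add_mod (a + (P-1)) P
  have hr : (a + (P-1)) % P < P := Nat.mod_lt _ hP
  set q := (a + (P-1))/P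
  set r := (a + (P-1)) % P
  zify [show 1 ≤ P from hP] at h ⊢
  nlinarith [h, hr]

lemma ceil_ub (a P : ℕ) : (a + (P-1))/P * P ≤ a + (P-1) := Nat.div_mul_le_self _ _

lemma pair_le (P b x : ℕ) (hP : 0 < P) (h1 : 1 ≤ x) (h2 : x ≤ P - 1) :
    ((x*b + (P-1))/P * P - x*b) + (((P-x)*b + (P-1))/P * P - (P-x)*b) ≤ P := by
  have hxP : x ≤ P := by omega
  have l1 := ceil_le (x*b) P hP
  have l2 := ceil_le ((P-x)*b) P hP
  have u1 := ceil_ub (x*b) P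
  have u2 := ceil_ub ((P-x)*b) P
  set cx := (x*b + (P-1))/P
  set cy := ((P-x)*b + (P-1))/P
  have hP' : (0:ℤ) < (P:ℤ) := by exact_mod_cast hP
  by_contra hcon
  push_neg at hcon
  zify [l1, l2, hxP, show 1 ≤ P from hP] at hcon u1 u2
  have hb1 : ((b:ℤ)+1)*P < (cx + cy)*P := by nlinarith
  have hb2 : ((cx:ℤ) + cy)*P < ((b:ℤ)+2)*P := by nlinarith
  have e1 : ((b:ℤ)+1) < cx + cy := lt_of_mul_lt_mul_right hb1 (le_of_lt hP')
  have e2 : ((cx:ℤ)+cy) < (b:ℤ)+2 := lt_of_mul_lt_mul_right hb2 (le_of_lt hP')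
  omega

lemma resid (P b n : ℕ) (hP : 0 < P) (hn : n ≤ P) :
    2 * ∑ x ∈ range (n+1), ((x*b + (P-1))/P * P - x*b) ≤ P*(P-1) := by
  obtain ⟨Q, rfl⟩ : ∃ Q, P = Q + 1 := ⟨P-1, by omega⟩
  set t : ℕ → ℕ := fun x => (x*b + (Q+1-1))/(Q+1) * (Q+1) - x*b with ht
  show 2 * ∑ x ∈ range (n+1), t x ≤ (Q+1)*(Q+1-1)
  have ht0 : t 0 = 0 := by simp [ht, Nat.div_eq_of_lt (Nat.lt_succ_self Q)]
  have htP : t (Q+1) = 0 := by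
    simp only [ht]
    rw [Nat.mul_add_div hP, Nat.div_eq_of_lt (show Q+1 - 1 < Q+1 by omega)]
    simp [mul_comm]
  have hmono : ∑ x ∈ range (n+1), t x ≤ ∑ x ∈ range (Q+1+1), t x :=
    Finset.sum_le_sum_of_subset (by
      intro i hi; simp only [mem_range] at *; omega)
  have hsplit : ∑ x ∈ range (Q+1+1), t x = ∑ j ∈ range Q, t (j+1) := by
    rw [Finset.sum_range_succ, htP, add_zero, Finset.sum_range_succ', ht0, add_zero]
  have hrefl : ∑ j ∈ range Q, t (Q+1 - (j+1)) = ∑ j ∈ range Q, t (j+1) := by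
    have h := Finset.sum_range_reflect (fun j => t (j+1)) Q
    rw [← h]
    apply Finset.sum_congr rfl
    intro j hj
    simp only [mem_range] at hj
    congr 1
    omega
  have hpairsum : ∑ j ∈ range Q, (t (j+1) + t (Q+1 - (j+1))) ≤ Q * (Q+1) := by
    calc ∑ j ∈ range Q, (t (j+1) + t (Q+1 - (j+1)))
        ≤ ∑ _j ∈ range Q, (Q+1) := by
          apply Finset.sum_le_sum
          intro j hj
          simp only [mem_range] at hj
          exact pair_le (Q+1) b (j+1) hP (by omega) (by omega)
      _ = Q * (Q+1) := by rw [Finset.sum_const, card_range, smul_eq_mul]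
  rw [Finset.sum_add_distrib, hrefl] at hpairsum
  have : 2 * ∑ j ∈ range Q, t (j+1) ≤ Q * (Q+1) := by omega
  calc 2 * ∑ x ∈ range (n+1), t x ≤ 2 * ∑ x ∈ range (Q+1+1), t x := by omega
    _ = 2 * ∑ j ∈ range Q, t (j+1) := by rw [hsplit]
    _ ≤ Q * (Q+1) := this
    _ = (Q+1)*(Q+1-1) := by rw [Nat.add_sub_cancel, Nat.mul_comm]

lemma sum_ceil (P b n : ℕ) (hP : 0 < P) (hn : n ≤ P) :
    2 * (∑ x ∈ range (n+1), (x*b + (P-1))/P) * P ≤ b*(n*(n+1)) + P*(P-1) := by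
  have e1 : ∑ x ∈ range (n+1), (x*b + (P-1))/P * P
      = ∑ x ∈ range (n+1), (x*b + ((x*b + (P-1))/P * P - x*b)) :=
    Finset.sum_congr rfl (fun x _ => (Nat.add_sub_cancel' (ceil_le _ _ hP)).symm)
  have e2 : (∑ x ∈ range (n+1), (x*b + (P-1))/P) * P
      = (∑ x ∈ range (n+1), x)*b + ∑ x ∈ range (n+1), ((x*b + (P-1))/P * P - x*b) := by
    rw [Finset.sum_mul]
    rw [e1, Finset.sum_add_distrib, Finset.sum_mul]
  have gauss : (∑ x ∈ range (n+1), x) * 2 = (n+1)*n := Finset.sum_range_id_mul_two (n+1)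
  have hr := resid P b n hP hn
  calc 2 * (∑ x ∈ range (n+1), (x*b + (P-1))/P) * P
      = 2*((∑ x ∈ range (n+1), x)*b) + 2*∑ x ∈ range (n+1), ((x*b + (P-1))/P * P - x*b) := by
        rw [mul_assoc, e2]; ring
    _ = b*(n*(n+1)) + 2*∑ x ∈ range (n+1), ((x*b + (P-1))/P * P - x*b) := by
        rw [show 2*((∑ x ∈ range (n+1), x)*b) = ((∑ x ∈ range (n+1), x)*2)*b by ring, gauss]
        ring
    _ ≤ b*(n*(n+1)) + P*(P-1) := by omega

lemma Sc (m k : ℕ) (hm : 0 < m) (hk : 0 < k) :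
    2 * ∑ j ∈ range (m+1), (j*k + (m+k-1))/(m+k) ≤ k*m + (m+k-1) := by
  have h := sum_ceil (m+k) k m (by omega) (by omega)
  have h2 : 2 * (∑ j ∈ range (m+1), (j*k + (m+k-1))/(m+k)) * (m+k)
      ≤ (k*m + (m+k-1)) * (m+k) := by
    calc 2 * (∑ j ∈ range (m+1), (j*k + (m+k-1))/(m+k)) * (m+k)
        ≤ k*(m*(m+1)) + (m+k)*(m+k-1) := h
      _ ≤ (k*m)*(m+k) + (m+k)*(m+k-1) := by
          have : k*(m*(m+1)) ≤ (k*m)*(m+k) := by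
            rw [show k*(m*(m+1)) = (k*m)*(m+1) by ring]
            exact Nat.mul_le_mul_left _ (by omega)
          omega
      _ = (k*m + (m+k-1)) * (m+k) := by ring
  exact Nat.le_of_mul_le_mul_right (by rw [mul_comm] at h2 ⊢; exact h2) (by omega)

lemma Sd (m k : ℕ) (hm : 0 < m) (hk : 0 < k) :
    2 * ∑ x ∈ range (m+1), (x*(k-1) + (m-1))/m ≤ (k-1)*(m+1) + (m-1) := by
  have h := sum_ceil m (k-1) m hm (le_refl m)
  have h2 : 2 * (∑ x ∈ range (m+1), (x*(k-1) + (m-1))/m) * m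
      ≤ ((k-1)*(m+1) + (m-1)) * m := by
    calc 2 * (∑ x ∈ range (m+1), (x*(k-1) + (m-1))/m) * m
        ≤ (k-1)*(m*(m+1)) + m*(m-1) := h
      _ = ((k-1)*(m+1) + (m-1)) * m := by ring
  exact Nat.le_of_mul_le_mul_right (by rw [mul_comm] at h2 ⊢; exact h2) hm

def dd (m k x : ℕ) : ℕ := (x*(k-1) + (m-1))/m
def cc (m k j : ℕ) : ℕ := (j*k + (m+k-1))/(m+k)
def ff (m k j : ℕ) : ℕ := m*j/(m+k)
def top1 (m k x : ℕ) : ℕ := 2*m+k-1 - x - dd m k x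
def E1 (m k : ℕ) : Finset (ℕ×ℕ) := (range (m+1)).biUnion fun x => {x} ×ˢ Icc x (top1 m k x)
def E2 (m k : ℕ) : Finset (ℕ×ℕ) :=
  (range (m+1)).biUnion fun y => Icc (y+1) (m + ff m k (m-y)) ×ˢ {y}

lemma mem_E1 {m k : ℕ} {p : ℕ×ℕ} :
    p ∈ E1 m k ↔ p.1 ≤ m ∧ p.1 ≤ p.2 ∧ p.2 ≤ top1 m k p.1 := by
  obtain ⟨a, b⟩ := p
  simp only [E1, mem_biUnion, mem_range, mem_product, mem_singleton, mem_Icc]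
  constructor
  · rintro ⟨x, hx, rfl, h⟩; exact ⟨by omega, h⟩
  · rintro ⟨h1, h2, h3⟩; exact ⟨a, by omega, rfl, h2, h3⟩

lemma mem_E2 {m k : ℕ} {p : ℕ×ℕ} :
    p ∈ E2 m k ↔ p.2 ≤ m ∧ p.2 < p.1 ∧ p.1 ≤ m + ff m k (m - p.2) := by
  obtain ⟨a, b⟩ := p
  simp only [E2, mem_biUnion, mem_range, mem_product, mem_singleton, mem_Icc]
  constructor
  · rintro ⟨y, hy, ⟨h1, h2⟩, rfl⟩; exact ⟨by omega, by omega, h2⟩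
  · rintro ⟨h1, h2, h3⟩; exact ⟨b, by omega, ⟨by omega, h3⟩, rfl⟩

lemma dd_le {m k x : ℕ} (hm : 0 < m) (hx : x ≤ m) : dd m k x ≤ k - 1 := by
  unfold dd
  calc (x*(k-1) + (m-1))/m ≤ (m*(k-1) + (m-1))/m :=
        Nat.div_le_div_right (Nat.add_le_add_right (Nat.mul_le_mul_right _ hx) _)
    _ = (k-1) + (m-1)/m := Nat.mul_add_div hm _ _
    _ = k - 1 := by rw [Nat.div_eq_of_lt (by omega), add_zero]

lemma ddm_le {m k x : ℕ} (hm : 0 < m) : x*(k-1) ≤ m * dd m k x := by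
  have := ceil_le (x*(k-1)) m hm
  unfold dd
  have e : m * ((x*(k-1) + (m-1))/m) = (x*(k-1) + (m-1))/m * m := Nat.mul_comm _ _
  omega

lemma card_E1 (m k : ℕ) (hm : 0 < m) (hk : 0 < k) :
    (E1 m k).card + ∑ x ∈ range (m+1), (2*x + dd m k x) = (m+1)*(2*m+k) := by
  have hdisj : ∀ x ∈ range (m+1), ∀ y ∈ range (m+1), x ≠ y →
      Disjoint ({x} ×ˢ Icc x (top1 m k x)) ({y} ×ˢ Icc y (top1 m k y)) := by
    intro x _ y _ hxy
    simp only [Finset.disjoint_left, mem_product, mem_singleton]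
    rintro ⟨a, b⟩ ⟨rfl, -⟩ ⟨rfl, -⟩
    exact hxy rfl
  rw [E1, Finset.card_biUnion hdisj, ← Finset.sum_add_distrib]
  have : ∀ x ∈ range (m+1),
      ({x} ×ˢ Icc x (top1 m k x)).card + (2*x + dd m k x) = 2*m+k := by
    intro x hx
    simp only [mem_range] at hx
    rw [Finset.card_product, Finset.card_singleton, one_mul, Nat.card_Icc]
    have h1 : dd m k x ≤ k - 1 := dd_le hm (by omega)
    unfold top1
    omega
  rw [Finset.sum_congr rfl this, Finset.sum_const, card_range, smul_eq_mul]

lemma card_E2 (m k : ℕ) (hm : 0 < m) :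
    (E2 m k).card = ∑ j ∈ range (m+1), (j + ff m k j) := by
  have hdisj : ∀ x ∈ range (m+1), ∀ y ∈ range (m+1), x ≠ y →
      Disjoint (Icc (x+1) (m + ff m k (m-x)) ×ˢ {x}) (Icc (y+1) (m + ff m k (m-y)) ×ˢ {y}) := by
    intro x _ y _ hxy
    simp only [Finset.disjoint_left, mem_product, mem_singleton]
    rintro ⟨a, b⟩ ⟨-, rfl⟩ ⟨-, rfl⟩
    exact hxy rfl
  rw [E2, Finset.card_biUnion hdisj]
  have e1 : ∀ y ∈ range (m+1),
      (Icc (y+1) (m + ff m k (m-y)) ×ˢ ({y} : Finset ℕ)).card = (m - y) + ff m k (m-y) := by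
    intro y hy
    simp only [mem_range] at hy
    rw [Finset.card_product, Finset.card_singleton, mul_one, Nat.card_Icc]
    omega
  rw [Finset.sum_congr rfl e1]
  rw [← Finset.sum_range_reflect]
  apply Finset.sum_congr rfl
  intro j hj
  simp only [mem_range] at hj
  congr 2 <;> omega

lemma ff_cc (m k j : ℕ) (hm : 0 < m) (hk : 0 < k) : j ≤ ff m k j + cc m k j := by
  by_contra hcon
  push_neg at hcon
  have hcon' : (ff m k j + cc m k j + 1)*(m+k) ≤ j*(m+k) :=
    Nat.mul_le_mul_right _ (by omega)
  have hA := Nat.div_add_mod (m*j) (m+k)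
  have hA2 : (m*j) % (m+k) < m + k := Nat.mod_lt _ (by omega)
  have hB := ceil_le (j*k) (m+k) (by omega)
  have e1 : j*(m+k) = j*m + j*k := by ring
  have e2 : (ff m k j + cc m k j + 1)*(m+k)
      = ff m k j*(m+k) + cc m k j*(m+k) + (m+k) := by ring
  have e3 : m*j = j*m := Nat.mul_comm _ _
  have e4 : (m+k) * (m*j/(m+k)) = ff m k j * (m+k) := by rw [ff]; ring
  rw [ff] at *
  rw [cc] at *
  omega

lemma count (m k : ℕ) (hm : 0 < m) (hk : 0 < k) :
    4*m^2 + 3*m + 3 ≤ 2 * ((E1 m k).card + (E2 m k).card) := by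
  obtain ⟨K, rfl⟩ : ∃ K, k = K + 1 := ⟨k - 1, by omega⟩
  have z1 := card_E1 m (K+1) hm hk
  have z2 := card_E2 m (K+1) hm
  have hSc : 2 * ∑ j ∈ range (m+1), cc m (K+1) j ≤ (K+1)*m + m + K := by
    have h := Sc m (K+1) hm hk
    have h' : 2 * ∑ j ∈ range (m+1), cc m (K+1) j
        ≤ (K+1)*m + (m+(K+1)-1) := by unfold cc; exact h
    omega
  have hSd : 2 * ∑ x ∈ range (m+1), dd m (K+1) x + 1 ≤ K*(m+1) + m := by
    have h := Sd m (K+1) hm hk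
    have h' : 2 * ∑ x ∈ range (m+1), dd m (K+1) x
        ≤ (K+1-1)*(m+1) + (m-1) := by unfold dd; exact h
    simp only [Nat.add_sub_cancel] at h'
    omega
  have z3 : ∑ j ∈ range (m+1), (2*(j:ℤ) - cc m (K+1) j)
      ≤ ∑ j ∈ range (m+1), ((j:ℤ) + ff m (K+1) j) := by
    apply Finset.sum_le_sum
    intro j _
    have h := ff_cc m (K+1) j hm hk
    have h' : (j:ℤ) ≤ ff m (K+1) j + cc m (K+1) j := by exact_mod_cast h
    linarith
  zify at z1 z2 hSc hSd ⊢
  have s1 : ∑ x ∈ range (m+1), (2*(x:ℤ) + dd m (K+1) x)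
      = 2*(∑ x ∈ range (m+1), (x:ℤ)) + ∑ x ∈ range (m+1), ((dd m (K+1) x : ℤ)) := by
    rw [Finset.sum_add_distrib, Finset.mul_sum]
  have s2 : ∑ j ∈ range (m+1), (2*(j:ℤ) - cc m (K+1) j)
      = 2*(∑ j ∈ range (m+1), (j:ℤ)) - ∑ j ∈ range (m+1), ((cc m (K+1) j : ℤ)) := by
    rw [Finset.sum_sub_distrib, Finset.mul_sum]
  have s3 : ∑ j ∈ range (m+1), ((j:ℤ) + ff m (K+1) j)
      = (∑ j ∈ range (m+1), (j:ℤ)) + ∑ j ∈ range (m+1), ((ff m (K+1) j : ℤ)) := by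
    rw [Finset.sum_add_distrib]
  rw [s1] at z1
  rw [s2, s3] at z3
  rw [s3] at z2
  nlinarith [z1, z2, z3, hSc, hSd]

lemma ff_mul_le (m k j : ℕ) : ff m k j * (m+k) ≤ m*j := Nat.div_mul_le_self _ _


set_option maxHeartbeats 2000000 in
lemma main_ineq (m : ℕ) (hm : 0 < m) (s t : ℝ) (hs : 0 < s) (ht : 0 < t) (hst : s ≤ t)
    (h : (m:ℝ)/s + (m:ℝ)/t < 1) :
    (4*(m:ℝ)^2 + 3*m + 3)/2 ≤ (Set.ncard {p : ℕ×ℕ | (p.1:ℝ)/s + (p.2:ℝ)/t < 1} : ℝ) := by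
  set Q : Set (ℕ×ℕ) := {p : ℕ×ℕ | (p.1:ℝ)/s + (p.2:ℝ)/t < 1} with hQ
  have hm0 : (0:ℝ) < m := by exact_mod_cast hm
  -- t > 2m
  have hts : (m:ℝ)/t ≤ (m:ℝ)/s := div_le_div_of_nonneg_left (le_of_lt hm0) hs hst
  have h2m : 2*(m:ℝ) < t := by
    have h1 : (m:ℝ)/t < 1/2 := by linarith
    rw [div_lt_iff₀ ht] at h1
    linarith
  -- ceiling q = 2m + k
  have hceil : 2*m < ⌈t⌉₊ := by
    apply Nat.lt_ceil.mpr
    push_cast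
    linarith
  obtain ⟨k, hk, hq⟩ : ∃ k, 0 < k ∧ ⌈t⌉₊ = 2*m + k := ⟨⌈t⌉₊ - 2*m, by omega, by omega⟩
  have htq : t ≤ ((2*m+k : ℕ) : ℝ) := by rw [← hq]; exact Nat.le_ceil t
  have hqt : ((2*m+k : ℕ) : ℝ) < t + 1 := by
    rw [← hq]
    exact Nat.ceil_lt_add_one (le_of_lt ht)
  have htq' : t ≤ 2*(m:ℝ)+k := by push_cast at htq; linarith
  have hqt' : 2*(m:ℝ)+k-1 < t := by push_cast at hqt; linarith
  have hq1pos : (0:ℝ) < 2*(m:ℝ)+k-1 := by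
    have : (1:ℝ) ≤ m := by exact_mod_cast hm
    have : (1:ℝ) ≤ k := by exact_mod_cast hk
    linarith
  -- harmonic bound
  have hsum : 1/s + 1/t < 1/m := by
    rw [lt_div_iff₀ hm0]
    have : (1/s + 1/t) * m = m/s + m/t := by field_simp
    rw [this]; exact h
  -- E1 ⊆ Q
  have hE1 : ↑(E1 m k) ⊆ Q := by
    intro p hp
    rw [Finset.mem_coe, mem_E1] at hp
    obtain ⟨hxm, hxy, hyt⟩ := hp
    obtain ⟨x, y⟩ := p
    simp only at hxm hxy hyt ⊢
    have hdd1 : dd m k x ≤ k - 1 := dd_le hm hxm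
    have htop : y + x + dd m k x + 1 ≤ 2*m+k := by
      unfold top1 at hyt; omega
    have hdd2 : x*(k-1) ≤ m * dd m k x := ddm_le hm
    -- real versions
    have c1 : (x:ℝ)*((k:ℝ)-1) ≤ (m:ℝ) * (dd m k x : ℝ) := by
      have := hdd2
      zify [hk] at this
      exact_mod_cast this
    have c2 : (y:ℝ) + x + (dd m k x : ℝ) + 1 ≤ 2*m+k := by exact_mod_cast htop
    have hC : (x:ℝ)*((m:ℝ)+k-1) + y*m ≤ m*(2*m+k-1) := by nlinarith
    have key : (x:ℝ)/m + ((y:ℝ) - x)/(2*m+k-1) ≤ 1 := by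
      rw [div_add_div _ _ (ne_of_gt hm0) (ne_of_gt hq1pos), div_le_one (by positivity)]
      nlinarith
    rw [hQ]; show (x:ℝ)/s + (y:ℝ)/t < 1
    have htlt : 1/t < 1/(2*(m:ℝ)+k-1) := by
      apply one_div_lt_one_div_of_lt hq1pos hqt'
    rcases Nat.eq_zero_or_pos x with hx0 | hxpos
    · subst hx0
      simp only [Nat.cast_zero, zero_div, zero_add, sub_zero] at key ⊢
      rcases Nat.eq_zero_or_pos y with hy0 | hypos
      · subst hy0; norm_num
      · have hy0R : (0:ℝ) < y := by exact_mod_cast hypos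
        have hlt : (y:ℝ)/t < (y:ℝ)/(2*(m:ℝ)+k-1) :=
          div_lt_div_of_pos_left hy0R hq1pos hqt'
        linarith
    · have hx0R : (0:ℝ) < x := by exact_mod_cast hxpos
      have hyxR : (0:ℝ) ≤ (y:ℝ) - x := by
        have : (x:ℝ) ≤ y := by exact_mod_cast hxy
        linarith
      have eq1 : (x:ℝ)/s + (y:ℝ)/t = x*(1/s + 1/t) + ((y:ℝ)-x)*(1/t) := by
        field_simp; ring
      have b1 : (x:ℝ)*(1/s + 1/t) < x*(1/m) := by
        apply mul_lt_mul_of_pos_left hsum hx0R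
      have b2 : ((y:ℝ)-x)*(1/t) ≤ ((y:ℝ)-x)*(1/(2*(m:ℝ)+k-1)) :=
        mul_le_mul_of_nonneg_left (le_of_lt htlt) hyxR
      have e2 : (x:ℝ)*(1/m) = x/m := by ring
      have e3 : ((y:ℝ)-x)*(1/(2*(m:ℝ)+k-1)) = ((y:ℝ)-x)/(2*(m:ℝ)+k-1) := by ring
      linarith [key]
  -- E2 ⊆ Q
  have hE2 : ↑(E2 m k) ⊆ Q := by
    intro p hp
    rw [Finset.mem_coe, mem_E2] at hp
    obtain ⟨hym, hyx, hxf⟩ := hp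
    obtain ⟨x, y⟩ := p
    simp only at hym hyx hxf ⊢
    have hff := ff_mul_le m k (m - y)
    have cF : ((ff m k (m-y) : ℕ):ℝ)*((m:ℝ)+k) ≤ m*((m:ℝ)-y) := by
      have := hff
      zify [hym] at this
      exact_mod_cast this
    have cx : (x:ℝ) ≤ (m:ℝ) + (ff m k (m-y) : ℕ) := by exact_mod_cast hxf
    have hmk0 : (0:ℝ) < (m:ℝ)+k := by
      have : (1:ℝ) ≤ k := by exact_mod_cast hk
      linarith
    have st1 : (x:ℝ)*((m:ℝ)+k) ≤ ((m:ℝ) + (ff m k (m-y) : ℕ))*((m:ℝ)+k) :=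
      mul_le_mul_of_nonneg_right cx (le_of_lt hmk0)
    have st2 : ((m:ℝ) + (ff m k (m-y) : ℕ))*((m:ℝ)+k)
        = (m:ℝ)*((m:ℝ)+k) + ((ff m k (m-y) : ℕ):ℝ)*((m:ℝ)+k) := by ring
    have hC2 : (x:ℝ)*((m:ℝ)+k) + y*m ≤ m*(2*m+k) := by
      rw [st2] at st1
      nlinarith [cF]
    have hx1 : (1:ℝ) ≤ x := by
      have : 1 ≤ x := by omega
      exact_mod_cast this
    have hyR : (y:ℝ) < x := by exact_mod_cast hyx
    have hq0 : (0:ℝ) < 2*(m:ℝ)+k := by linarith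
    have key2 : (x:ℝ)/m - ((x:ℝ)-y)/(2*(m:ℝ)+k) ≤ 1 := by
      rw [div_sub_div _ _ (ne_of_gt hm0) (ne_of_gt hq0), div_le_one (by positivity)]
      nlinarith
    rw [hQ]; show (x:ℝ)/s + (y:ℝ)/t < 1
    have eq1 : (x:ℝ)/s + (y:ℝ)/t = x*(1/s + 1/t) - ((x:ℝ)-y)*(1/t) := by
      field_simp; ring
    have b1 : (x:ℝ)*(1/s + 1/t) < x*(1/m) := mul_lt_mul_of_pos_left hsum (by linarith)
    have b2 : ((x:ℝ)-y)*(1/(2*(m:ℝ)+k)) ≤ ((x:ℝ)-y)*(1/t) := by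
      apply mul_le_mul_of_nonneg_left _ (by linarith)
      apply one_div_le_one_div_of_le ht (by linarith)
    have e2 : (x:ℝ)*(1/m) = x/m := by ring
    have e3 : ((x:ℝ)-y)*(1/(2*(m:ℝ)+k)) = ((x:ℝ)-y)/(2*(m:ℝ)+k) := by ring
    linarith [key2]
  -- finiteness
  have hQfin : Q.Finite := by
    apply Set.Finite.subset ((range (2*m+k) ×ˢ range (2*m+k) : Finset (ℕ×ℕ)).finite_toSet)
    intro p hp
    rw [hQ] at hp
    simp only [Set.mem_setOf_eq] at hp
    have h1 : (p.1:ℝ)/s < 1 := by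
      have : (0:ℝ) ≤ (p.2:ℝ)/t := by positivity
      linarith
    have h2 : (p.2:ℝ)/t < 1 := by
      have : (0:ℝ) ≤ (p.1:ℝ)/s := by positivity
      linarith
    rw [div_lt_one hs] at h1
    rw [div_lt_one ht] at h2
    have hp1 : (p.1:ℝ) < ((2*m+k : ℕ):ℝ) := by push_cast; linarith
    have hp2 : (p.2:ℝ) < ((2*m+k : ℕ):ℝ) := by push_cast; linarith
    simp only [Finset.coe_product, Set.mem_prod, Finset.mem_coe, Finset.mem_range]
    exact ⟨by exact_mod_cast hp1, by exact_mod_cast hp2⟩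
  -- disjointness and union
  have hdisj : Disjoint (E1 m k) (E2 m k) := by
    rw [Finset.disjoint_left]
    intro p hp1 hp2
    rw [mem_E1] at hp1
    rw [mem_E2] at hp2
    omega
  have hcard : ((E1 m k) ∪ (E2 m k)).card = (E1 m k).card + (E2 m k).card :=
    Finset.card_union_of_disjoint hdisj
  have hsub : ↑((E1 m k) ∪ (E2 m k)) ⊆ Q := by
    rw [Finset.coe_union]
    exact Set.union_subset hE1 hE2
  have hle : ((E1 m k) ∪ (E2 m k)).card ≤ Q.ncard := by
    rw [← Set.ncard_coe_finset]
    exact Set.ncard_le_ncard hsub hQfin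
  have hcount := count m k hm hk
  have hfinal : 4*m^2 + 3*m + 3 ≤ 2 * Q.ncard := by omega
  have : ((4*m^2 + 3*m + 3 : ℕ) : ℝ) ≤ ((2 * Q.ncard : ℕ) : ℝ) := by exact_mod_cast hfinal
  push_cast at this
  linarith


/-- σ_{2,m} ≥ (4m² + 3m + 3)/2 : if (m,m) lies in the open region
{(x,y) : x/s + y/t < 1}, then the number of lattice points of that region
is at least (4m² + 3m + 3)/2. -/
theorem stmt_0 (m : ℕ) (hm : 0 < m) (s t : ℝ) (hs : 0 < s) (ht : 0 < t)
    (h : (m : ℝ) / s + (m : ℝ) / t < 1) :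
    (4 * (m : ℝ) ^ 2 + 3 * m + 3) / 2 ≤
      (Set.ncard {p : ℕ × ℕ | (p.1 : ℝ) / s + (p.2 : ℝ) / t < 1} : ℝ) := by
  rcases le_total s t with hst | hst
  · exact main_ineq m hm s t hs ht hst h
  · have hswap : {p : ℕ × ℕ | (p.1 : ℝ) / s + (p.2 : ℝ) / t < 1}
        = Prod.swap '' {p : ℕ × ℕ | (p.1 : ℝ) / t + (p.2 : ℝ) / s < 1} := by
      ext ⟨a, b⟩
      simp only [Set.mem_setOf_eq, Set.mem_image, Prod.exists, Prod.swap_prod_mk,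
        Prod.mk.injEq]
      constructor
      · intro hab
        exact ⟨b, a, by linarith, rfl, rfl⟩
      · rintro ⟨c, d, hcd, rfl, rfl⟩
        linarith
    rw [hswap, Set.ncard_image_of_injective _ Prod.swap_injective]
    exact main_ineq m hm t s ht hs hst (by linarith)
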